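/- Under the assumptions: (i) I(Y;X_s|Z_s)=0 with Z_s a deterministic function of X_s; (ii) Z_sr = Z_s (almost surely); (iii) I(Z_se; Z_sr) = 0; it follows that I(Z_se; Y | X_s) ≥ I(Z_se; Y). -/

import Mathlib

open Finset

/-- Pushforward pmf of `p` under the map `f` (finite setting). -/
noncomputable def pmfMap {Ω α : Type*} [Fintype Ω] [DecidableEq α]
    (p : Ω → ℝ) (f : Ω → α) : α → ℝ :=
  fun a => ∑ ω, if f ω = a then p ω else 0

/-- Shannon entropy (natural log) of the random variable `f` under `p`. -/
noncomputable def entropy {Ω α : Type*} [Fintype Ω] [Fintype α] [DecidableEq α]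
    (p : Ω → ℝ) (f : Ω → α) : ℝ :=
  -∑ a, pmfMap p f a * Real.log (pmfMap p f a)

/-- Conditional entropy H(f | g). -/
noncomputable def condEntropy {Ω α β : Type*} [Fintype Ω] [Fintype α] [Fintype β]
    [DecidableEq α] [DecidableEq β] (p : Ω → ℝ) (f : Ω → α) (g : Ω → β) : ℝ :=
  -∑ a, ∑ b, pmfMap p (fun ω => (f ω, g ω)) (a, b) *
      Real.log (pmfMap p (fun ω => (f ω, g ω)) (a, b) / pmfMap p g b)

/-- Mutual information I(f ; g). -/
noncomputable def mutualInfo {Ω α β : Type*} [Fintype Ω] [Fintype α] [Fintype β]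
    [DecidableEq α] [DecidableEq β] (p : Ω → ℝ) (f : Ω → α) (g : Ω → β) : ℝ :=
  ∑ a, ∑ b, pmfMap p (fun ω => (f ω, g ω)) (a, b) *
      Real.log (pmfMap p (fun ω => (f ω, g ω)) (a, b) / (pmfMap p f a * pmfMap p g b))

/-- Conditional mutual information I(f ; g | h). -/
noncomputable def condMutualInfo {Ω α β γ : Type*} [Fintype Ω] [Fintype α] [Fintype β] [Fintype γ]
    [DecidableEq α] [DecidableEq β] [DecidableEq γ]
    (p : Ω → ℝ) (f : Ω → α) (g : Ω → β) (h : Ω → γ) : ℝ :=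
  ∑ a, ∑ b, ∑ c, pmfMap p (fun ω => (f ω, g ω, h ω)) (a, b, c) *
      Real.log ((pmfMap p (fun ω => (f ω, g ω, h ω)) (a, b, c) * pmfMap p h c) /
        (pmfMap p (fun ω => (f ω, h ω)) (a, c) * pmfMap p (fun ω => (g ω, h ω)) (b, c)))

/-- Interaction information I(f ; g ; h) := I(f;g) - I(f;g|h). -/
noncomputable def interactionInfo {Ω α β γ : Type*} [Fintype Ω] [Fintype α] [Fintype β] [Fintype γ]
    [DecidableEq α] [DecidableEq β] [DecidableEq γ]
    (p : Ω → ℝ) (f : Ω → α) (g : Ω → β) (h : Ω → γ) : ℝ :=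
  mutualInfo p f g - condMutualInfo p f g h

/-- A pmf on a finite type. -/
def IsPmf {Ω : Type*} [Fintype Ω] (p : Ω → ℝ) : Prop :=
  (∀ ω, 0 ≤ p ω) ∧ ∑ ω, p ω = 1


section aux
variable {Ω α β : Type*} [Fintype Ω]

lemma pmfMap_nonneg [DecidableEq α] {p : Ω → ℝ} (hp : ∀ ω, 0 ≤ p ω) (X : Ω → α) (a : α) :
    0 ≤ pmfMap p X a :=
  Finset.sum_nonneg fun ω _ => by split <;> simp [hp ω]

lemma le_pmfMap [DecidableEq α] {p : Ω → ℝ} (hp : ∀ ω, 0 ≤ p ω) (X : Ω → α) (ω : Ω) :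
    p ω ≤ pmfMap p X (X ω) := by
  have := Finset.single_le_sum (f := fun ω' => if X ω' = X ω then p ω' else 0)
    (fun i _ => by split <;> simp [hp i]) (Finset.mem_univ ω)
  simpa [pmfMap] using this

lemma sum_pmfMap_mul [Fintype α] [DecidableEq α] (p : Ω → ℝ) (X : Ω → α) (φ : α → ℝ) :
    ∑ a, pmfMap p X a * φ a = ∑ ω, p ω * φ (X ω) := by
  unfold pmfMap
  have h : ∀ a, (∑ ω, if X ω = a then p ω else 0) * φ a
      = ∑ ω, if X ω = a then p ω * φ (X ω) else 0 := by
    intro a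
    rw [Finset.sum_mul]
    apply Finset.sum_congr rfl
    intro ω _
    by_cases h : X ω = a <;> simp [h]
  simp_rw [h]
  rw [Finset.sum_comm]
  apply Finset.sum_congr rfl
  intro ω _
  simp

lemma sum_pmfMap [Fintype α] [DecidableEq α] (p : Ω → ℝ) (X : Ω → α) :
    ∑ a, pmfMap p X a = ∑ ω, p ω := by
  have := sum_pmfMap_mul p X (fun _ => 1)
  simpa using this

lemma pmfMap_comp_inj [DecidableEq α] [DecidableEq β] {e : α → β} (he : Function.Injective e)
    (p : Ω → ℝ) (X : Ω → α) (a : α) :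
    pmfMap p (fun ω => e (X ω)) (e a) = pmfMap p X a := by
  unfold pmfMap
  apply Finset.sum_congr rfl
  intro ω _
  simp [he.eq_iff]

lemma pmfMap_congr_ae [DecidableEq α] {p : Ω → ℝ} (hp : ∀ ω, 0 ≤ p ω) {X X' : Ω → α}
    (h : ∀ ω, 0 < p ω → X ω = X' ω) : pmfMap p X = pmfMap p X' := by
  funext a
  apply Finset.sum_congr rfl
  intro ω _
  rcases (hp ω).eq_or_lt with h0 | h0
  · split <;> split <;> simp [← h0]
  · rw [h ω h0]

lemma pmfMap_le_comp [DecidableEq α] [DecidableEq β] {p : Ω → ℝ} (hp : ∀ ω, 0 ≤ p ω)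
    (X : Ω → α) (φ : α → β) (x : α) :
    pmfMap p X x ≤ pmfMap p (fun ω => φ (X ω)) (φ x) := by
  apply Finset.sum_le_sum
  intro ω _
  dsimp only
  by_cases h : X ω = x
  · rw [if_pos h, if_pos (by rw [h])]
  · rw [if_neg h]; split
    · exact hp ω
    · exact le_refl 0

lemma pmfMap_fst_marg [Fintype α] [DecidableEq α] [DecidableEq β] (p : Ω → ℝ)
    (f : Ω → α) (g : Ω → β) (b : β) :
    ∑ a, pmfMap p (fun ω => (f ω, g ω)) (a, b) = pmfMap p g b := by
  unfold pmfMap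
  rw [Finset.sum_comm]
  apply Finset.sum_congr rfl
  intro ω _
  rcases eq_or_ne (g ω) b with h | h <;> simp [Prod.ext_iff, h]

end aux

section aux2
variable {Ω α β γ : Type*} [Fintype Ω] [Fintype α] [Fintype β] [Fintype γ]
  [DecidableEq α] [DecidableEq β] [DecidableEq γ]


lemma entropy_omega (p : Ω → ℝ) (X : Ω → α) :
    entropy p X = -∑ ω, p ω * Real.log (pmfMap p X (X ω)) := by
  unfold entropy
  rw [sum_pmfMap_mul p X (fun a => Real.log (pmfMap p X a))]

lemma mutualInfo_omega (p : Ω → ℝ) (f : Ω → α) (g : Ω → β) :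
    mutualInfo p f g = ∑ ω, p ω * Real.log (pmfMap p (fun ω => (f ω, g ω)) (f ω, g ω)
      / (pmfMap p f (f ω) * pmfMap p g (g ω))) := by
  unfold mutualInfo
  have := sum_pmfMap_mul p (fun ω => (f ω, g ω))
    (fun x => Real.log (pmfMap p (fun ω => (f ω, g ω)) x / (pmfMap p f x.1 * pmfMap p g x.2)))
  rw [Fintype.sum_prod_type] at this
  exact this

lemma condMutualInfo_omega (p : Ω → ℝ) (f : Ω → α) (g : Ω → β) (h : Ω → γ) :
    condMutualInfo p f g h = ∑ ω, p ω *
      Real.log ((pmfMap p (fun ω => (f ω, g ω, h ω)) (f ω, g ω, h ω) * pmfMap p h (h ω)) /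
        (pmfMap p (fun ω => (f ω, h ω)) (f ω, h ω) * pmfMap p (fun ω => (g ω, h ω)) (g ω, h ω))) := by
  unfold condMutualInfo
  have := sum_pmfMap_mul p (fun ω => (f ω, g ω, h ω))
    (fun x => Real.log ((pmfMap p (fun ω => (f ω, g ω, h ω)) x * pmfMap p h x.2.2) /
      (pmfMap p (fun ω => (f ω, h ω)) (x.1, x.2.2) * pmfMap p (fun ω => (g ω, h ω)) (x.2.1, x.2.2))))
  rw [Fintype.sum_prod_type] at this
  simp_rw [Fintype.sum_prod_type] at this
  exact this


lemma entropy_comp_inj {e : α → β} (he : Function.Injective e) (p : Ω → ℝ) (X : Ω → α) :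
    entropy p (fun ω => e (X ω)) = entropy p X := by
  rw [entropy_omega, entropy_omega]
  congr 1
  apply Finset.sum_congr rfl
  intro ω _
  rw [pmfMap_comp_inj he]

lemma entropy_comp_inj' {e : α → β} (he : Function.Injective e) (p : Ω → ℝ)
    (X : Ω → α) (X' : Ω → β) (hX : ∀ ω, X' ω = e (X ω)) :
    entropy p X' = entropy p X := by
  have hfe : X' = fun ω => e (X ω) := funext hX
  rw [hfe]
  exact entropy_comp_inj he p X

lemma mutualInfo_eq_entropy {p : Ω → ℝ} (hp : ∀ ω, 0 ≤ p ω) (f : Ω → α) (g : Ω → β) :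
    mutualInfo p f g = entropy p f + entropy p g - entropy p (fun ω => (f ω, g ω)) := by
  rw [mutualInfo_omega, entropy_omega p f, entropy_omega p g,
    entropy_omega p (fun ω => (f ω, g ω))]
  have h : ∀ ω ∈ Finset.univ, p ω * Real.log (pmfMap p (fun ω => (f ω, g ω)) (f ω, g ω)
      / (pmfMap p f (f ω) * pmfMap p g (g ω)))
      = p ω * Real.log (pmfMap p (fun ω => (f ω, g ω)) (f ω, g ω))
        - (p ω * Real.log (pmfMap p f (f ω)) + p ω * Real.log (pmfMap p g (g ω))) := by
    intro ω _
    rcases (hp ω).eq_or_lt with h0 | h0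
    · simp [← h0]
    · have hPf : (0:ℝ) < pmfMap p f (f ω) := lt_of_lt_of_le h0 (le_pmfMap hp f ω)
      have hPg : (0:ℝ) < pmfMap p g (g ω) := lt_of_lt_of_le h0 (le_pmfMap hp g ω)
      have hPfg : (0:ℝ) < pmfMap p (fun ω => (f ω, g ω)) (f ω, g ω) :=
        lt_of_lt_of_le h0 (le_pmfMap hp _ ω)
      rw [Real.log_div hPfg.ne' (by positivity), Real.log_mul hPf.ne' hPg.ne']
      ring
  rw [Finset.sum_congr rfl h, Finset.sum_sub_distrib, Finset.sum_add_distrib]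
  ring

lemma condMutualInfo_eq_entropy {p : Ω → ℝ} (hp : ∀ ω, 0 ≤ p ω)
    (f : Ω → α) (g : Ω → β) (h : Ω → γ) :
    condMutualInfo p f g h = entropy p (fun ω => (f ω, h ω)) + entropy p (fun ω => (g ω, h ω))
      - entropy p (fun ω => (f ω, g ω, h ω)) - entropy p h := by
  rw [condMutualInfo_omega, entropy_omega p (fun ω => (f ω, h ω)),
    entropy_omega p (fun ω => (g ω, h ω)), entropy_omega p (fun ω => (f ω, g ω, h ω)),
    entropy_omega p h]
  have hh : ∀ ω ∈ Finset.univ,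
      p ω * Real.log ((pmfMap p (fun ω => (f ω, g ω, h ω)) (f ω, g ω, h ω) * pmfMap p h (h ω)) /
        (pmfMap p (fun ω => (f ω, h ω)) (f ω, h ω) * pmfMap p (fun ω => (g ω, h ω)) (g ω, h ω)))
      = (p ω * Real.log (pmfMap p (fun ω => (f ω, g ω, h ω)) (f ω, g ω, h ω))
          + p ω * Real.log (pmfMap p h (h ω)))
        - (p ω * Real.log (pmfMap p (fun ω => (f ω, h ω)) (f ω, h ω))
          + p ω * Real.log (pmfMap p (fun ω => (g ω, h ω)) (g ω, h ω))) := by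
    intro ω _
    rcases (hp ω).eq_or_lt with h0 | h0
    · simp [← h0]
    · have h1 : (0:ℝ) < pmfMap p (fun ω => (f ω, g ω, h ω)) (f ω, g ω, h ω) :=
        lt_of_lt_of_le h0 (le_pmfMap hp _ ω)
      have h2 : (0:ℝ) < pmfMap p h (h ω) := lt_of_lt_of_le h0 (le_pmfMap hp _ ω)
      have h3 : (0:ℝ) < pmfMap p (fun ω => (f ω, h ω)) (f ω, h ω) :=
        lt_of_lt_of_le h0 (le_pmfMap hp _ ω)
      have h4 : (0:ℝ) < pmfMap p (fun ω => (g ω, h ω)) (g ω, h ω) :=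
        lt_of_lt_of_le h0 (le_pmfMap hp _ ω)
      rw [Real.log_div (by positivity) (by positivity), Real.log_mul h1.ne' h2.ne',
        Real.log_mul h3.ne' h4.ne']
      ring
  rw [Finset.sum_congr rfl hh, Finset.sum_sub_distrib, Finset.sum_add_distrib,
    Finset.sum_add_distrib]
  ring

lemma condMutualInfo_nonneg {p : Ω → ℝ} (hp0 : ∀ ω, 0 ≤ p ω) (hp1 : ∑ ω, p ω = 1)
    (f : Ω → α) (g : Ω → β) (h : Ω → γ) :
    0 ≤ condMutualInfo p f g h := by
  have hT := pmfMap_nonneg hp0 (fun ω => (f ω, g ω, h ω))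
  have hFH := pmfMap_nonneg hp0 (fun ω => (f ω, h ω))
  have hGH := pmfMap_nonneg hp0 (fun ω => (g ω, h ω))
  have hH := pmfMap_nonneg hp0 h
  -- termwise lower bound
  have key : ∀ a b c,
      pmfMap p (fun ω => (f ω, g ω, h ω)) (a, b, c)
        - (if 0 < pmfMap p (fun ω => (f ω, g ω, h ω)) (a, b, c) then
            pmfMap p (fun ω => (f ω, h ω)) (a, c) * pmfMap p (fun ω => (g ω, h ω)) (b, c)
              / pmfMap p h c else 0)
      ≤ pmfMap p (fun ω => (f ω, g ω, h ω)) (a, b, c) *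
        Real.log ((pmfMap p (fun ω => (f ω, g ω, h ω)) (a, b, c) * pmfMap p h c) /
          (pmfMap p (fun ω => (f ω, h ω)) (a, c) * pmfMap p (fun ω => (g ω, h ω)) (b, c))) := by
    intro a b c
    set q := pmfMap p (fun ω => (f ω, g ω, h ω)) (a, b, c) with hq
    by_cases hqpos : 0 < q
    · rw [if_pos hqpos]
      have hac : q ≤ pmfMap p (fun ω => (f ω, h ω)) (a, c) :=
        pmfMap_le_comp hp0 (fun ω => (f ω, g ω, h ω)) (fun x => (x.1, x.2.2)) (a, b, c)
      have hbc : q ≤ pmfMap p (fun ω => (g ω, h ω)) (b, c) :=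
        pmfMap_le_comp hp0 (fun ω => (f ω, g ω, h ω)) (fun x => (x.2.1, x.2.2)) (a, b, c)
      have hc : q ≤ pmfMap p h c :=
        pmfMap_le_comp hp0 (fun ω => (f ω, g ω, h ω)) (fun x => x.2.2) (a, b, c)
      have hacp : 0 < pmfMap p (fun ω => (f ω, h ω)) (a, c) := lt_of_lt_of_le hqpos hac
      have hbcp : 0 < pmfMap p (fun ω => (g ω, h ω)) (b, c) := lt_of_lt_of_le hqpos hbc
      have hcp : 0 < pmfMap p h c := lt_of_lt_of_le hqpos hc
      have hxpos : 0 < pmfMap p (fun ω => (f ω, h ω)) (a, c) *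
          pmfMap p (fun ω => (g ω, h ω)) (b, c) / (q * pmfMap p h c) := by positivity
      have hlog := Real.log_le_sub_one_of_pos hxpos
      have hrev : Real.log ((q * pmfMap p h c) /
          (pmfMap p (fun ω => (f ω, h ω)) (a, c) * pmfMap p (fun ω => (g ω, h ω)) (b, c)))
          = -Real.log (pmfMap p (fun ω => (f ω, h ω)) (a, c) *
            pmfMap p (fun ω => (g ω, h ω)) (b, c) / (q * pmfMap p h c)) := by
        rw [← Real.log_inv]
        congr 1
        field_simp
      rw [hrev]
      have : q * -Real.log (pmfMap p (fun ω => (f ω, h ω)) (a, c) *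
            pmfMap p (fun ω => (g ω, h ω)) (b, c) / (q * pmfMap p h c))
          ≥ q * (1 - pmfMap p (fun ω => (f ω, h ω)) (a, c) *
            pmfMap p (fun ω => (g ω, h ω)) (b, c) / (q * pmfMap p h c)) := by
        apply mul_le_mul_of_nonneg_left _ hqpos.le
        linarith
      refine le_trans ?_ this
      have : q * (pmfMap p (fun ω => (f ω, h ω)) (a, c) *
          pmfMap p (fun ω => (g ω, h ω)) (b, c) / (q * pmfMap p h c))
          = pmfMap p (fun ω => (f ω, h ω)) (a, c) *
            pmfMap p (fun ω => (g ω, h ω)) (b, c) / pmfMap p h c := by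
        field_simp
      rw [mul_sub, this, mul_one]
    · have hq0 : q = 0 := le_antisymm (not_lt.1 hqpos) (hT (a, b, c))
      rw [if_neg hqpos, hq0]
      simp
  -- sum the bound
  unfold condMutualInfo
  have step1 : ∑ a, ∑ b, ∑ c, (pmfMap p (fun ω => (f ω, g ω, h ω)) (a, b, c)
        - (if 0 < pmfMap p (fun ω => (f ω, g ω, h ω)) (a, b, c) then
            pmfMap p (fun ω => (f ω, h ω)) (a, c) * pmfMap p (fun ω => (g ω, h ω)) (b, c)
              / pmfMap p h c else 0))
      ≤ ∑ a, ∑ b, ∑ c, pmfMap p (fun ω => (f ω, g ω, h ω)) (a, b, c) *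
        Real.log ((pmfMap p (fun ω => (f ω, g ω, h ω)) (a, b, c) * pmfMap p h c) /
          (pmfMap p (fun ω => (f ω, h ω)) (a, c) * pmfMap p (fun ω => (g ω, h ω)) (b, c))) := by
    apply Finset.sum_le_sum; intro a _
    apply Finset.sum_le_sum; intro b _
    apply Finset.sum_le_sum; intro c _
    exact key a b c
  refine le_trans ?_ step1
  simp_rw [Finset.sum_sub_distrib]
  have sub1 : ∑ a, ∑ b, ∑ c, pmfMap p (fun ω => (f ω, g ω, h ω)) (a, b, c) = 1 := by
    have := sum_pmfMap p (fun ω => (f ω, g ω, h ω))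
    rw [Fintype.sum_prod_type] at this
    simp_rw [Fintype.sum_prod_type] at this
    rw [this, hp1]
  have bnd : ∀ a b c, (if 0 < pmfMap p (fun ω => (f ω, g ω, h ω)) (a, b, c) then
        pmfMap p (fun ω => (f ω, h ω)) (a, c) * pmfMap p (fun ω => (g ω, h ω)) (b, c)
          / pmfMap p h c else 0)
      ≤ pmfMap p (fun ω => (f ω, h ω)) (a, c) * pmfMap p (fun ω => (g ω, h ω)) (b, c) *
          (if 0 < pmfMap p h c then (pmfMap p h c)⁻¹ else 0) := by
    intro a b c
    by_cases hq : 0 < pmfMap p (fun ω => (f ω, g ω, h ω)) (a, b, c)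
    · have hc : pmfMap p (fun ω => (f ω, g ω, h ω)) (a, b, c) ≤ pmfMap p h c :=
        pmfMap_le_comp hp0 (fun ω => (f ω, g ω, h ω)) (fun x => x.2.2) (a, b, c)
      rw [if_pos hq, if_pos (lt_of_lt_of_le hq hc)]
      rw [div_eq_mul_inv]
    · rw [if_neg hq]
      apply mul_nonneg (mul_nonneg (hFH _) (hGH _))
      split
      · positivity
      · exact le_refl 0
  have sub2 : ∑ a, ∑ b, ∑ c, (if 0 < pmfMap p (fun ω => (f ω, g ω, h ω)) (a, b, c) then
        pmfMap p (fun ω => (f ω, h ω)) (a, c) * pmfMap p (fun ω => (g ω, h ω)) (b, c)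
          / pmfMap p h c else 0) ≤ 1 := by
    have step2 : ∑ a, ∑ b, ∑ c, (if 0 < pmfMap p (fun ω => (f ω, g ω, h ω)) (a, b, c) then
          pmfMap p (fun ω => (f ω, h ω)) (a, c) * pmfMap p (fun ω => (g ω, h ω)) (b, c)
            / pmfMap p h c else 0)
        ≤ ∑ a, ∑ b, ∑ c, pmfMap p (fun ω => (f ω, h ω)) (a, c) *
            pmfMap p (fun ω => (g ω, h ω)) (b, c) *
            (if 0 < pmfMap p h c then (pmfMap p h c)⁻¹ else 0) := by
      apply Finset.sum_le_sum; intro a _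
      apply Finset.sum_le_sum; intro b _
      apply Finset.sum_le_sum; intro c _
      exact bnd a b c
    refine le_trans step2 ?_
    have comm : ∑ a, ∑ b, ∑ c, pmfMap p (fun ω => (f ω, h ω)) (a, c) *
            pmfMap p (fun ω => (g ω, h ω)) (b, c) *
            (if 0 < pmfMap p h c then (pmfMap p h c)⁻¹ else 0)
        = ∑ c, ∑ a, ∑ b, pmfMap p (fun ω => (f ω, h ω)) (a, c) *
            pmfMap p (fun ω => (g ω, h ω)) (b, c) *
            (if 0 < pmfMap p h c then (pmfMap p h c)⁻¹ else 0) := by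
      rw [show (∑ a, ∑ b, ∑ c, pmfMap p (fun ω => (f ω, h ω)) (a, c) *
            pmfMap p (fun ω => (g ω, h ω)) (b, c) *
            (if 0 < pmfMap p h c then (pmfMap p h c)⁻¹ else 0))
          = ∑ a, ∑ c, ∑ b, pmfMap p (fun ω => (f ω, h ω)) (a, c) *
            pmfMap p (fun ω => (g ω, h ω)) (b, c) *
            (if 0 < pmfMap p h c then (pmfMap p h c)⁻¹ else 0) from
        Finset.sum_congr rfl (fun a _ => Finset.sum_comm)]
      exact Finset.sum_comm
    rw [comm]
    have inner : ∀ c, ∑ a, ∑ b, pmfMap p (fun ω => (f ω, h ω)) (a, c) *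
            pmfMap p (fun ω => (g ω, h ω)) (b, c) *
            (if 0 < pmfMap p h c then (pmfMap p h c)⁻¹ else 0)
        = (if 0 < pmfMap p h c then pmfMap p h c else 0) := by
      intro c
      simp_rw [mul_assoc, ← Finset.mul_sum, ← Finset.sum_mul]
      rw [pmfMap_fst_marg p f h c, pmfMap_fst_marg p g h c]
      by_cases hc : 0 < pmfMap p h c
      · rw [if_pos hc, if_pos hc]
        field_simp
      · rw [if_neg hc, if_neg hc]
        simp
    simp_rw [inner]
    have : ∑ c, (if 0 < pmfMap p h c then pmfMap p h c else 0) ≤ ∑ c, pmfMap p h c := by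
      apply Finset.sum_le_sum; intro c _
      split
      · exact le_refl _
      · exact hH c
    refine le_trans this ?_
    rw [sum_pmfMap p h, hp1]
  linarith

end aux2


set_option maxHeartbeats 1000000 in
/-- if Z_s = f(X_s) is sufficient for Y, Z_sr coincides with Z_s almost
surely, and I(Z_se;Z_sr) = 0, then I(Z_se;Y|X_s) ≥ I(Z_se;Y). -/
theorem shape_erased_cmi_lower_bound
    {Ω A B C D : Type*} [Fintype Ω] [Fintype A] [Fintype B] [Fintype C] [Fintype D]
    [DecidableEq A] [DecidableEq B] [DecidableEq C] [DecidableEq D]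
    (p : Ω → ℝ) (hp : IsPmf p) (Y : Ω → A) (Xs : Ω → B) (f : B → C)
    (Zsr : Ω → C) (Zse : Ω → D)
    (hsuff : condMutualInfo p Y Xs (fun ω => f (Xs ω)) = 0)
    (hZsr : ∀ ω, 0 < p ω → Zsr ω = f (Xs ω))
    (hindep : mutualInfo p Zse Zsr = 0) :
    mutualInfo p Zse Y ≤ condMutualInfo p Zse Y Xs := by
  obtain ⟨hp0, hp1⟩ := hp
  -- replace Zsr by the a.s. equal Zs := f ∘ Xs
  have hind' : mutualInfo p Zse (fun ω => f (Xs ω)) = 0 := by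
    have e1 : pmfMap p (fun ω => (Zse ω, Zsr ω))
        = pmfMap p (fun ω => (Zse ω, f (Xs ω))) :=
      pmfMap_congr_ae hp0 (fun ω h => by rw [hZsr ω h])
    have e2 : pmfMap p Zsr = pmfMap p (fun ω => f (Xs ω)) :=
      pmfMap_congr_ae hp0 (fun ω h => hZsr ω h)
    rw [← hindep]
    unfold mutualInfo
    rw [e1, e2]
  -- entropy decompositions
  have d1 := mutualInfo_eq_entropy hp0 Zse Y
  have d2 := condMutualInfo_eq_entropy hp0 Zse Y Xs
  have d3 := mutualInfo_eq_entropy hp0 Zse (fun ω => f (Xs ω))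
  have d4 := condMutualInfo_eq_entropy hp0 Zse (fun ω => f (Xs ω)) Y
  have d5 := condMutualInfo_eq_entropy hp0 Y Xs (fun ω => f (Xs ω))
  have d6 := condMutualInfo_eq_entropy hp0 Y Xs (fun ω => (Zse ω, f (Xs ω)))
  -- entropy recodings using injective maps
  have r1 : entropy p (fun ω => (Xs ω, f (Xs ω))) = entropy p Xs :=
    entropy_comp_inj' (e := fun b => (b, f b))
      (fun x y hxy => by simpa using congrArg Prod.fst hxy) p Xs _ (fun ω => rfl)
  have r2 : entropy p (fun ω => (Y ω, Xs ω, f (Xs ω))) = entropy p (fun ω => (Y ω, Xs ω)) :=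
    entropy_comp_inj' (e := fun x => (x.1, x.2, f x.2))
      (fun x y hxy => by
        rcases x with ⟨a, b⟩; rcases y with ⟨a', b'⟩; simp_all)
      p (fun ω => (Y ω, Xs ω)) _ (fun ω => rfl)
  have r3 : entropy p (fun ω => (f (Xs ω), Y ω)) = entropy p (fun ω => (Y ω, f (Xs ω))) :=
    entropy_comp_inj' (e := fun x => (x.2, x.1))
      (fun x y hxy => by
        rcases x with ⟨a, b⟩; rcases y with ⟨a', b'⟩; simp_all)
      p (fun ω => (Y ω, f (Xs ω))) _ (fun ω => rfl)
  have r4 : entropy p (fun ω => (Zse ω, f (Xs ω), Y ω))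
      = entropy p (fun ω => (Y ω, (Zse ω, f (Xs ω)))) :=
    entropy_comp_inj' (e := fun x => (x.2.1, x.2.2, x.1))
      (fun x y hxy => by
        rcases x with ⟨a, d, c⟩; rcases y with ⟨a', d', c'⟩; simp_all)
      p (fun ω => (Y ω, (Zse ω, f (Xs ω)))) _ (fun ω => rfl)
  have r5 : entropy p (fun ω => (Xs ω, (Zse ω, f (Xs ω))))
      = entropy p (fun ω => (Zse ω, Xs ω)) :=
    entropy_comp_inj' (e := fun x => (x.2, (x.1, f x.2)))
      (fun x y hxy => by
        rcases x with ⟨d, b⟩; rcases y with ⟨d', b'⟩; simp_all)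
      p (fun ω => (Zse ω, Xs ω)) _ (fun ω => rfl)
  have r6 : entropy p (fun ω => (Y ω, Xs ω, (Zse ω, f (Xs ω))))
      = entropy p (fun ω => (Zse ω, Y ω, Xs ω)) :=
    entropy_comp_inj' (e := fun x => (x.2.1, x.2.2, (x.1, f x.2.2)))
      (fun x y hxy => by
        rcases x with ⟨d, a, b⟩; rcases y with ⟨d', a', b'⟩; simp_all)
      p (fun ω => (Zse ω, Y ω, Xs ω)) _ (fun ω => rfl)
  -- nonnegativity of the two conditional mutual informations
  have n4 := condMutualInfo_nonneg hp0 hp1 Zse (fun ω => f (Xs ω)) Y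
  have n6 := condMutualInfo_nonneg hp0 hp1 Y Xs (fun ω => (Zse ω, f (Xs ω)))
  rw [d4] at n4
  rw [d6] at n6
  beta_reduce at d1 d2 d3 d4 d5 d6 n4 n6 hsuff hind' ⊢
  rw [d5] at hsuff
  rw [d3] at hind'
  rw [d1, d2]
  linarith [r1, r2, r3, r4, r5, r6, n4, n6, hsuff, hind']
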